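/- Let F separate points of R^D. Then S_ħ(R,δ) ≅ S_ħ(R̃,δ̃) if and only if there exist U ∈ GL_D(Z) and n ∈ Z^D such that R̃ = UR and δ̃ = δ + R^{-1}n. -/

import Mathlib

open scoped BigOperators

noncomputable section

abbrev V (D : ℕ) := Fin D → ℝ
abbrev L (D : ℕ) := Fin D → ℤ

def cz {D : ℕ} (n : L D) : V D := fun i => (n i : ℝ)

def Nr (D : ℕ) (x y : Fin D → ℝ) : ℝ :=
  ∑ m : Fin D, ∑ n : Fin D, if (n : ℕ) < (m : ℕ) then x m * y n else 0

def Nz (D : ℕ) (k l : L D) : ℤ :=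
  ∑ m : Fin D, ∑ n : Fin D, if (n : ℕ) < (m : ℕ) then k m * l n else 0

def Sh (D : ℕ) (hb : ℝ) (k : L D) (f : V D → ℂ) : V D → ℂ :=
  fun u => f (fun i => u i + hb * (k i : ℝ))

abbrev Alg (D : ℕ) := (L D) →₀ ((V D) → ℂ)

def amul (D : ℕ) (hb : ℝ) (q : ℂ) (a b : Alg D) : Alg D :=
  a.sum fun k f => b.sum fun l g =>
    Finsupp.single (k + l) ((q ^ (Nz D k l)) • (f * Sh D hb k g))

def astar (D : ℕ) (hb : ℝ) (q : ℂ) (a : Alg D) : Alg D :=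
  a.sum fun k f => Finsupp.single (-k) ((q ^ (Nz D (-k) (-k))) • Sh D hb (-k) (star f))

structure GoodF (D : ℕ) (hb : ℝ) (F : Set (V D → ℂ)) : Prop where
  zero_mem : (0 : V D → ℂ) ∈ F
  add_mem : ∀ f ∈ F, ∀ g ∈ F, f + g ∈ F
  mul_mem : ∀ f ∈ F, ∀ g ∈ F, f * g ∈ F
  smul_mem : ∀ (c : ℂ), ∀ f ∈ F, c • f ∈ F
  star_mem : ∀ f ∈ F, star f ∈ F
  shift_mem : ∀ (k : L D), ∀ f ∈ F, Sh D hb k f ∈ F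

def SeparatesPts (D : ℕ) (F : Set (V D → ℂ)) : Prop :=
  ∀ x y : V D, x ≠ y → ∃ f ∈ F, f x ≠ f y


abbrev DMod (D : ℕ) := (L D) →₀ ℂ

def Rinv {D : ℕ} (R : Matrix (Fin D) (Fin D) ℤ) : Matrix (Fin D) (Fin D) ℝ :=
  (R.map (Int.cast : ℤ → ℝ))⁻¹

def dact (D : ℕ) (hb : ℝ) (q : ℂ) (R : Matrix (Fin D) (Fin D) ℤ) (δ : V D)
    (a : Alg D) (v : DMod D) : DMod D :=
  a.sum fun n f => v.sum fun k c =>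
    Finsupp.single (k - R.mulVec n)
      ((q ^ (((Nr D ((Rinv R).mulVec (cz k) - cz n + δ) (cz n) : ℝ) : ℂ))) *
        f (hb • ((Rinv R).mulVec (cz k) - cz n + δ)) * c)

def DIso (D : ℕ) (hb : ℝ) (q : ℂ) (F : Set (V D → ℂ))
    (R : Matrix (Fin D) (Fin D) ℤ) (δ : V D)
    (R' : Matrix (Fin D) (Fin D) ℤ) (δ' : V D) : Prop :=
  ∃ φ : DMod D ≃ₗ[ℂ] DMod D,
    ∀ a : Alg D, (∀ k, a k ∈ F) → ∀ v : DMod D,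
      φ (dact D hb q R δ a v) = dact D hb q R' δ' a (φ v)



/-! ### Auxiliary lemmas -/

lemma cz_zero {D : ℕ} : cz (0 : L D) = 0 := by funext i; simp [cz]

lemma cz_neg {D : ℕ} (a : L D) : cz (-a) = - cz a := by funext i; simp [cz]

lemma cz_sub {D : ℕ} (a b : L D) : cz (a - b) = cz a - cz b := by
  funext i; simp [cz]

lemma cz_mulVec {D : ℕ} (M : Matrix (Fin D) (Fin D) ℤ) (x : L D) :
    cz (M.mulVec x) = (M.map (Int.cast : ℤ → ℝ)).mulVec (cz x) := by
  funext i
  simp [cz, Matrix.mulVec, dotProduct, Matrix.map_apply]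

lemma cz_single {D : ℕ} (j : Fin D) :
    cz (Pi.single j 1 : L D) = Pi.single j (1:ℝ) := by
  funext i
  by_cases h : i = j <;> simp [cz, Pi.single_apply, h]

lemma det_map {D : ℕ} (R : Matrix (Fin D) (Fin D) ℤ) :
    (R.map (Int.cast : ℤ → ℝ)).det = (R.det : ℝ) := by
  have := (RingHom.map_det (Int.castRingHom ℝ) R).symm
  simpa [RingHom.mapMatrix_apply] using this

lemma map_mul' {D : ℕ} (A B : Matrix (Fin D) (Fin D) ℤ) :
    (A * B).map (Int.cast : ℤ → ℝ) = A.map Int.cast * B.map Int.cast := by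
  have := Matrix.map_mul (L := A) (M := B) (f := Int.castRingHom ℝ)
  simpa using this

lemma map_inj {D : ℕ} (A B : Matrix (Fin D) (Fin D) ℤ)
    (h : A.map (Int.cast : ℤ → ℝ) = B.map Int.cast) : A = B := by
  ext i j
  have := congrFun (congrFun h i) j
  simpa [Matrix.map_apply] using this

lemma sum_equivMapDomain {α β M N : Type*} [Zero M] [AddCommMonoid N]
    (e : α ≃ β) (v : α →₀ M) (g : β → M → N) :
    (Finsupp.equivMapDomain e v).sum g = v.sum fun a m => g (e a) m := by
  simp [Finsupp.sum, Finsupp.equivMapDomain, Finset.sum_map]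

lemma Nr_zero_right (D : ℕ) (x : V D) : Nr D x 0 = 0 := by
  simp [Nr]

/-! ### Diagonal action of `F` -/

lemma dact_single0_apply (D : ℕ) (hb : ℝ) (q : ℂ) (R : Matrix (Fin D) (Fin D) ℤ) (δ : V D)
    (f : V D → ℂ) (w : DMod D) (l : L D) :
    (dact D hb q R δ (Finsupp.single 0 f) w) l
      = f (hb • ((Rinv R).mulVec (cz l) + δ)) * w l := by
  unfold dact
  rw [Finsupp.sum_single_index (by simp)]
  rw [Finsupp.sum_apply]
  unfold Finsupp.sum
  simp only [Matrix.mulVec_zero, sub_zero, cz_zero, Nr_zero_right, Complex.ofReal_zero,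
    Complex.cpow_zero, one_mul, Finsupp.single_apply]
  rw [Finset.sum_ite_eq']
  by_cases h : l ∈ w.support
  · simp [h]
  · simp [h, Finsupp.notMem_support_iff.mp h]

lemma exists_sigma (D : ℕ) (hb : ℝ) (hhb : 0 < hb) (q : ℂ)
    (F : Set (V D → ℂ)) (hF : GoodF D hb F) (hsep : SeparatesPts D F)
    (R R' : Matrix (Fin D) (Fin D) ℤ) (δ δ' : V D)
    (φ : DMod D ≃ₗ[ℂ] DMod D)
    (hφ : ∀ a : Alg D, (∀ k, a k ∈ F) → ∀ v : DMod D,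
      φ (dact D hb q R δ a v) = dact D hb q R' δ' a (φ v)) (k : L D) :
    ∃ l : L D, (Rinv R').mulVec (cz l) + δ' = (Rinv R).mulVec (cz k) + δ := by
  set w := φ (Finsupp.single k 1) with hw
  have hwne : w ≠ 0 := by
    rw [hw, LinearEquiv.map_ne_zero_iff]
    simp [Finsupp.single_eq_zero]
  obtain ⟨l, hl⟩ : ∃ l, w l ≠ 0 := by
    by_contra h
    push_neg at h
    exact hwne (Finsupp.ext fun a => by simpa using h a)
  refine ⟨l, ?_⟩
  have key : ∀ f ∈ F, f (hb • ((Rinv R').mulVec (cz l) + δ'))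
      = f (hb • ((Rinv R).mulVec (cz k) + δ)) := by
    intro f hf
    have hgood : ∀ m, (Finsupp.single (0 : L D) f) m ∈ F := by
      intro m
      rcases eq_or_ne m 0 with h | h
      · simpa [h] using hf
      · simpa [Finsupp.single_apply, Ne.symm h] using hF.zero_mem
    have h1 := hφ (Finsupp.single 0 f) hgood (Finsupp.single k 1)
    have hL : dact D hb q R δ (Finsupp.single 0 f) (Finsupp.single k 1)
        = Finsupp.single k (f (hb • ((Rinv R).mulVec (cz k) + δ))) := by
      ext m
      rw [dact_single0_apply]
      rcases eq_or_ne m k with rfl | h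
      · simp
      · simp [Finsupp.single_apply, h, Ne.symm h]
    rw [hL] at h1
    have h2 : φ (Finsupp.single k (f (hb • ((Rinv R).mulVec (cz k) + δ))))
        = f (hb • ((Rinv R).mulVec (cz k) + δ)) • w := by
      rw [hw, ← LinearEquiv.map_smul]
      congr 1
      rw [Finsupp.smul_single, smul_eq_mul, mul_one]
    rw [h2] at h1
    have h3 := congrArg (fun u : DMod D => u l) h1
    simp only [Finsupp.smul_apply, smul_eq_mul] at h3
    rw [dact_single0_apply] at h3
    exact (mul_right_cancel₀ hl h3.symm)
  by_contra hne
  obtain ⟨f, hf, hne'⟩ := hsep _ _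
    (fun h => hne (smul_right_injective (V D) (ne_of_gt hhb) h))
  exact hne' (key f hf)

/-! ### From the combinatorial data to `U` and `n` -/

lemma algebra_part (D : ℕ) (R R' : Matrix (Fin D) (Fin D) ℤ)
    (hR : R.det ≠ 0) (hR' : R'.det ≠ 0)
    (δ δ' : V D) (σ τ : L D → L D)
    (hσ : ∀ k, (Rinv R').mulVec (cz (σ k)) + δ' = (Rinv R).mulVec (cz k) + δ)
    (hτ : ∀ l, (Rinv R).mulVec (cz (τ l)) + δ = (Rinv R').mulVec (cz l) + δ') :
    ∃ (U : Matrix (Fin D) (Fin D) ℤ) (n : L D),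
      IsUnit U.det ∧ R' = U * R ∧ δ' = δ + (Rinv R).mulVec (cz n) := by
  set Rm := R.map (Int.cast : ℤ → ℝ) with hRm
  set R'm := R'.map (Int.cast : ℤ → ℝ) with hR'm
  have hdRm : IsUnit Rm.det := by
    rw [det_map]; exact isUnit_iff_ne_zero.mpr (by exact_mod_cast hR)
  have hdR'm : IsUnit R'm.det := by
    rw [det_map]; exact isUnit_iff_ne_zero.mpr (by exact_mod_cast hR')
  have key : ∀ (S S'm : Matrix (Fin D) (Fin D) ℝ) (d d' : V D) (s : L D → L D),
      IsUnit S'm.det →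
      (∀ k, S'm⁻¹.mulVec (cz (s k)) + d' = S.mulVec (cz k) + d) →
      ∀ k, cz (s k) - cz (s 0) = (S'm * S).mulVec (cz k) := by
    intro S S'm d d' s hdet hs k
    have h0 := hs 0
    rw [cz_zero, Matrix.mulVec_zero, zero_add] at h0
    have hsub : S'm⁻¹.mulVec (cz (s k)) - S'm⁻¹.mulVec (cz (s 0)) = S.mulVec (cz k) := by
      have := hs k
      have h1 : S'm⁻¹.mulVec (cz (s k)) + d' - (S'm⁻¹.mulVec (cz (s 0)) + d')
          = S.mulVec (cz k) + d - d := by rw [this, h0]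
      simpa using h1
    rw [← Matrix.mulVec_sub] at hsub
    have := congrArg (S'm.mulVec) hsub
    rwa [Matrix.mulVec_mulVec, Matrix.mul_nonsing_inv _ hdet, Matrix.one_mulVec,
      Matrix.mulVec_mulVec] at this
  have hBσ := key (Rm⁻¹) R'm δ δ' σ hdR'm (fun k => hσ k)
  have hBτ := key (R'm⁻¹) Rm δ' δ τ hdRm (fun l => hτ l)
  set U : Matrix (Fin D) (Fin D) ℤ := Matrix.of (fun i j => σ (Pi.single j 1) i - σ 0 i)
    with hUdef
  set W : Matrix (Fin D) (Fin D) ℤ := Matrix.of (fun i j => τ (Pi.single j 1) i - τ 0 i)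
    with hWdef
  have hUm : U.map (Int.cast : ℤ → ℝ) = R'm * Rm⁻¹ := by
    ext i j
    have := congrFun (hBσ (Pi.single j 1)) i
    rw [cz_single] at this
    have h2 : ((R'm * Rm⁻¹).mulVec (Pi.single j (1:ℝ))) i = (R'm * Rm⁻¹) i j := by
      simp [Matrix.mulVec_single]
    rw [h2] at this
    simp only [Matrix.map_apply, hUdef, Matrix.of_apply]
    rw [← this]
    simp [cz]
  have hWm : W.map (Int.cast : ℤ → ℝ) = Rm * R'm⁻¹ := by
    ext i j
    have := congrFun (hBτ (Pi.single j 1)) i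
    rw [cz_single] at this
    have h2 : ((Rm * R'm⁻¹).mulVec (Pi.single j (1:ℝ))) i = (Rm * R'm⁻¹) i j := by
      simp [Matrix.mulVec_single]
    rw [h2] at this
    simp only [Matrix.map_apply, hWdef, Matrix.of_apply]
    rw [← this]
    simp [cz]
  have hUWm : (U.map (Int.cast : ℤ → ℝ)) * (W.map Int.cast) = 1 := by
    rw [hUm, hWm]
    calc R'm * Rm⁻¹ * (Rm * R'm⁻¹) = R'm * (Rm⁻¹ * Rm) * R'm⁻¹ := by
          rw [Matrix.mul_assoc, Matrix.mul_assoc, Matrix.mul_assoc]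
      _ = 1 := by rw [Matrix.nonsing_inv_mul _ hdRm, Matrix.mul_one,
            Matrix.mul_nonsing_inv _ hdR'm]
  have hUW : U * W = 1 := by
    apply map_inj
    rw [map_mul', hUWm]
    exact (Matrix.map_one _ Int.cast_zero Int.cast_one).symm
  have hdetU : IsUnit U.det := by
    apply IsUnit.of_mul_eq_one W.det
    rw [← Matrix.det_mul, hUW, Matrix.det_one]
  have hRU : R' = U * R := by
    apply map_inj
    rw [map_mul', hUm, Matrix.mul_assoc, Matrix.nonsing_inv_mul _ hdRm, Matrix.mul_one]
  refine ⟨U, -(W.mulVec (σ 0)), hdetU, hRU, ?_⟩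
  have h0 := hσ 0
  rw [cz_zero, Matrix.mulVec_zero, zero_add] at h0
  have hA' : Rinv R' = Rm⁻¹ * (W.map (Int.cast : ℤ → ℝ)) := by
    show R'm⁻¹ = _
    have : R'm = (U.map (Int.cast : ℤ → ℝ)) * Rm := by
      rw [hR'm, hRU]; exact map_mul' U R
    rw [this, Matrix.mul_inv_rev]
    congr 1
    exact Matrix.inv_eq_right_inv hUWm
  have hrw : (Rinv R').mulVec (cz (σ 0)) = (Rinv R).mulVec (cz (W.mulVec (σ 0))) := by
    rw [hA', ← Matrix.mulVec_mulVec, cz_mulVec]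
    rfl
  rw [hrw] at h0
  funext i
  have h2 := congrFun h0 i
  simp only [Pi.add_apply] at h2
  simp only [cz_neg, Matrix.mulVec_neg, Pi.add_apply, Pi.neg_apply]
  linarith

/-! ### Backward direction -/

lemma backward (D : ℕ) (hb : ℝ) (q : ℂ) (F : Set (V D → ℂ))
    (R R' : Matrix (Fin D) (Fin D) ℤ) (hR : R.det ≠ 0) (δ δ' : V D)
    (U : Matrix (Fin D) (Fin D) ℤ) (n : L D) (hU : IsUnit U.det)
    (hRU : R' = U * R) (hδ : δ' = δ + (Rinv R).mulVec (cz n)) :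
    DIso D hb q F R δ R' δ' := by
  classical
  set W : Matrix (Fin D) (Fin D) ℤ := U⁻¹ with hWdef
  have hWU : W * U = 1 := Matrix.nonsing_inv_mul _ hU
  have hUW : U * W = 1 := Matrix.mul_nonsing_inv _ hU
  have hli : ∀ k : L D, W.mulVec (U.mulVec (k - n)) + n = k := by
    intro k
    rw [Matrix.mulVec_mulVec, hWU, Matrix.one_mulVec, sub_add_cancel]
  have hri : ∀ l : L D, U.mulVec (W.mulVec l + n - n) = l := by
    intro l
    rw [add_sub_cancel_right, Matrix.mulVec_mulVec, hUW, Matrix.one_mulVec]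
  let e : L D ≃ L D :=
    { toFun := fun k => U.mulVec (k - n)
      invFun := fun l => W.mulVec l + n
      left_inv := hli
      right_inv := hri }
  have he : ∀ k, e k = U.mulVec (k - n) := fun _ => rfl
  -- the key vector identity
  have hdUm : IsUnit ((U.map (Int.cast : ℤ → ℝ)).det) := by
    rw [det_map]
    exact hU.map (Int.castRingHom ℝ)
  have hA' : Rinv R' = (R.map (Int.cast : ℤ → ℝ))⁻¹ * (U.map (Int.cast : ℤ → ℝ))⁻¹ := by
    show (R'.map (Int.cast : ℤ → ℝ))⁻¹ = _
    rw [hRU, map_mul', Matrix.mul_inv_rev]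
  have hvec : ∀ k : L D,
      (Rinv R').mulVec (cz (e k)) + δ' = (Rinv R).mulVec (cz k) + δ := by
    intro k
    have h1 : (U.map (Int.cast : ℤ → ℝ))⁻¹.mulVec
        ((U.map (Int.cast : ℤ → ℝ)).mulVec (cz (k - n))) = cz (k - n) := by
      rw [Matrix.mulVec_mulVec, Matrix.nonsing_inv_mul _ hdUm, Matrix.one_mulVec]
    rw [he, cz_mulVec, hA', ← Matrix.mulVec_mulVec, h1, cz_sub, Matrix.mulVec_sub, hδ]
    show (Rinv R).mulVec (cz k) - (Rinv R).mulVec (cz n) + (δ + (Rinv R).mulVec (cz n)) = _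
    abel
  have hvec' : ∀ (k m : L D),
      (Rinv R').mulVec (cz (e k)) - cz m + δ' = (Rinv R).mulVec (cz k) - cz m + δ := by
    intro k m
    have := hvec k
    funext i
    have h2 := congrFun this i
    simp only [Pi.add_apply] at h2
    simp only [Pi.add_apply, Pi.sub_apply]
    linarith
  have hidx : ∀ (k m : L D), e (k - R.mulVec m) = e k - R'.mulVec m := by
    intro k m
    rw [he, he, hRU, sub_right_comm, Matrix.mulVec_sub, ← Matrix.mulVec_mulVec]
  refine ⟨Finsupp.domLCongr e, ?_⟩
  intro a _ v
  unfold dact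
  rw [map_finsuppSum]
  have hφv : (Finsupp.domLCongr e (R := ℂ) v : DMod D) = Finsupp.equivMapDomain e v :=
    Finsupp.domLCongr_apply e v
  rw [hφv]
  refine Finsupp.sum_congr ?_
  intro m _
  rw [map_finsuppSum, sum_equivMapDomain]
  refine Finsupp.sum_congr ?_
  intro k _
  rw [Finsupp.domLCongr_single, hidx k m, hvec' k m]

/-- Proposition 3.11: if `F` separates points, then `S_ħ(R,δ) ≅ S_ħ(R̃,δ̃)` if and only if
there exist `U ∈ GL_D(ℤ)` and `n ∈ ℤ^D` with `R̃ = UR` and `δ̃ = δ + R⁻¹n`. -/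
theorem stmt9 (D : ℕ) (hb : ℝ) (hhb : 0 < hb) (q : ℂ) (hq : ‖q‖ = 1)
    (F : Set (V D → ℂ)) (hF : GoodF D hb F) (hsep : SeparatesPts D F)
    (R R' : Matrix (Fin D) (Fin D) ℤ) (hR : R.det ≠ 0) (hR' : R'.det ≠ 0)
    (δ δ' : V D) :
    DIso D hb q F R δ R' δ' ↔
      ∃ (U : Matrix (Fin D) (Fin D) ℤ) (n : L D),
        IsUnit U.det ∧ R' = U * R ∧ δ' = δ + (Rinv R).mulVec (cz n) := by
  constructor
  · rintro ⟨φ, hφ⟩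
    have hsymm : ∀ a : Alg D, (∀ k, a k ∈ F) → ∀ u : DMod D,
        φ.symm (dact D hb q R' δ' a u) = dact D hb q R δ a (φ.symm u) := by
      intro a ha u
      have h1 := hφ a ha (φ.symm u)
      rw [LinearEquiv.apply_symm_apply] at h1
      rw [← h1, LinearEquiv.symm_apply_apply]
    choose σ hσ using fun k => exists_sigma D hb hhb q F hF hsep R R' δ δ' φ hφ k
    choose τ hτ using fun l => exists_sigma D hb hhb q F hF hsep R' R δ' δ φ.symm hsymm l
    exact algebra_part D R R' hR hR' δ δ' σ τ hσ hτ
  · rintro ⟨U, n, hU, hRU, hδ⟩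
    exact backward D hb q F R R' hR δ δ' U n hU hRU hδ
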